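/- For any a ≥ 2, Λ(a) = Λ(⌈a/2⌉) + Λ(⌊a/2⌋) + ⌊a/2⌋. -/

import Mathlib

/-- `U` induces a disjoint union of chains such that any two elements belonging to different
chains are incomparable; equivalently, comparability restricted to `U` is transitive
(so the comparability graph induced on `U` is a vertex-disjoint union of cliques). -/
def IsChainUnion {α : Type*} [PartialOrder α] (U : Finset α) : Prop :=
  ∀ x ∈ U, ∀ y ∈ U, ∀ z ∈ U,
    (x ≤ y ∨ y ≤ x) → (y ≤ z ∨ z ≤ y) → (x ≤ z ∨ z ≤ x)

/-- `ao α`: the maximum cardinality of a subset of the finite poset `α` that is a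
disjoint union of chains with elements of different chains incomparable. -/
noncomputable def ao (α : Type*) [Fintype α] [PartialOrder α] : ℕ :=
  sSup {m | ∃ U : Finset α, IsChainUnion U ∧ U.card = m}

/-- The height of a finite poset: the maximum size of a chain. -/
noncomputable def heightP (α : Type*) [Fintype α] [PartialOrder α] : ℕ :=
  sSup {m | ∃ C : Finset α, IsChain (· ≤ ·) (↑C : Set α) ∧ C.card = m}

/-- The width of a finite poset: the maximum size of an antichain. -/
noncomputable def widthP (α : Type*) [Fintype α] [PartialOrder α] : ℕ :=
  sSup {m | ∃ A : Finset α, IsAntichain (· ≤ ·) (↑A : Set α) ∧ A.card = m}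

/-- The cover graph of a poset: `x` and `y` are adjacent iff one covers the other. -/
def coverGraph (α : Type*) [PartialOrder α] : SimpleGraph α where
  Adj x y := x ⋖ y ∨ y ⋖ x
  symm := ⟨fun x y h => h.symm⟩
  loopless := ⟨fun x h => by rcases h with h | h <;> exact absurd h.lt (lt_irrefl x)⟩

/-- A poset is acyclic if its cover graph has no cycles. -/
def AcyclicPoset (α : Type*) [PartialOrder α] : Prop := (coverGraph α).IsAcyclic

/-- A poset is connected if its cover graph is connected. -/
def ConnectedPoset (α : Type*) [PartialOrder α] : Prop := (coverGraph α).Connected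

/-- A poset is `N`-free if there are no `p1, p2, p3, p4` with `p1 > p3`, `p1 > p4`, `p2 > p4`,
`p1 ∦ p2`, `p2 ∦ p3`, `p3 ∦ p4`. -/
def NFree (α : Type*) [PartialOrder α] : Prop :=
  ¬ ∃ p1 p2 p3 p4 : α, p3 < p1 ∧ p4 < p1 ∧ p4 < p2 ∧
      ¬(p1 ≤ p2 ∨ p2 ≤ p1) ∧ ¬(p2 ≤ p3 ∨ p3 ≤ p2) ∧ ¬(p3 ≤ p4 ∨ p4 ≤ p3)

/-- A poset is `V`-free if there are no `p1 < p2`, `p1 < p3` with `p2` incomparable to `p3`. -/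
def VFree (α : Type*) [PartialOrder α] : Prop :=
  ¬ ∃ p1 p2 p3 : α, p1 < p2 ∧ p1 < p3 ∧ ¬(p2 ≤ p3 ∨ p3 ≤ p2)

/-- `ao` of the family `T_n` of all acyclic posets on `n` elements:
the minimum of `ao P` over acyclic posets `P` of size `n`. -/
noncomputable def aoT (n : ℕ) : ℕ :=
  sInf {m | ∃ P : PartialOrder (Fin n),
    @AcyclicPoset (Fin n) P ∧ @ao (Fin n) (Fin.fintype n) P = m}

/-- `Λ(a, h)`: the maximum cardinality of a `V`-free poset `P` with `ao P = a` and
height at most `h`. -/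
noncomputable def Lam (a h : ℕ) : ℕ :=
  sSup {n | ∃ P : PartialOrder (Fin n), @VFree (Fin n) P ∧
    @ao (Fin n) (Fin.fintype n) P = a ∧ @heightP (Fin n) (Fin.fintype n) P ≤ h}

/-- `Λ(a) = Λ(a, a)`. -/
noncomputable def Lambda (a : ℕ) : ℕ := Lam a a

/-- `X(a)`: the maximum cardinality of an acyclic and `N`-free poset `P` with `ao P = a`. -/
noncomputable def Xmax (a : ℕ) : ℕ :=
  sSup {n | ∃ P : PartialOrder (Fin n), @AcyclicPoset (Fin n) P ∧
    @NFree (Fin n) P ∧ @ao (Fin n) (Fin.fintype n) P = a}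


set_option linter.unusedSectionVars false

section AuxProof


/-- The closed-form recursion for Λ. -/
def Lrec : ℕ → ℕ
  | 0 => 0
  | 1 => 1
  | (n+2) => Lrec ((n+3)/2) + Lrec ((n+2)/2) + (n+2)/2
decreasing_by all_goals omega

lemma Lrec_rec (a : ℕ) : Lrec a = Lrec ((a+1)/2) + Lrec (a/2) + a/2 := by
  match a with
  | 0 => simp [Lrec]
  | 1 => simp [Lrec]
  | (n+2) =>
    rw [Lrec]

lemma Lrec_even (p : ℕ) : Lrec (2*p) = 2 * Lrec p + p := by
  have h := Lrec_rec (2*p)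
  have h1 : (2*p+1)/2 = p := by omega
  have h2 : (2*p)/2 = p := by omega
  rw [h1, h2] at h; omega

lemma Lrec_odd (p : ℕ) : Lrec (2*p+1) = Lrec (p+1) + Lrec p + p := by
  have h := Lrec_rec (2*p+1)
  have h1 : (2*p+1+1)/2 = p+1 := by omega
  have h2 : (2*p+1)/2 = p := by omega
  rw [h1, h2] at h; omega

lemma claimB : ∀ k m n, m + n ≤ k → Lrec m + Lrec n + min m n ≤ Lrec (m+n) := by
  intro k
  induction k with
  | zero =>
    intro m n h
    have hm : m = 0 := by omega
    have hn : n = 0 := by omega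
    subst hm; subst hn; simp [Lrec]
  | succ k ih =>
    intro m n hmn
    rcases Nat.eq_zero_or_pos m with hm0 | hm0
    · subst hm0; simp [Lrec]
    rcases Nat.eq_zero_or_pos n with hn0 | hn0
    · subst hn0; simp [Lrec]
    rcases Nat.even_or_odd m with ⟨p, hp⟩ | ⟨p, hp⟩ <;>
      rcases Nat.even_or_odd n with ⟨q, hq⟩ | ⟨q, hq⟩
    · -- even, even
      subst hp; subst hq
      have h1 := ih p q (by omega)
      have e1 : p + p = 2*p := by omega
      have e2 : q + q = 2*q := by omega
      rw [e1, e2]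
      have e3 : 2*p + 2*q = 2*(p+q) := by omega
      rw [e3, Lrec_even, Lrec_even, Lrec_even]
      have : min (2*p) (2*q) ≤ min p q + min p q := by omega
      omega
    · -- even, odd
      subst hp; subst hq
      have h1 := ih p (q+1) (by omega)
      have h2 := ih p q (by omega)
      have e1 : p + p = 2*p := by omega
      rw [e1, Lrec_even]
      have e2 : 2*q+1 = 2*q+1 := rfl
      rw [show (2*q+1 : ℕ) = 2*q+1 from rfl, Lrec_odd]
      have e3 : 2*p + (2*q+1) = 2*(p+q)+1 := by omega
      rw [e3, Lrec_odd]
      have e4 : p + (q+1) = p+q+1 := by omega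
      rw [e4] at h1
      have : min (2*p) (2*q+1) ≤ min p (q+1) + min p q := by omega
      omega
    · -- odd, even
      subst hp; subst hq
      have h1 := ih (p+1) q (by omega)
      have h2 := ih p q (by omega)
      rw [Lrec_odd]
      have e1 : q + q = 2*q := by omega
      rw [e1, Lrec_even]
      have e3 : 2*p+1 + 2*q = 2*(p+q)+1 := by omega
      rw [e3, Lrec_odd]
      have e4 : p+1+q = p+q+1 := by omega
      rw [e4] at h1
      have : min (2*p+1) (2*q) ≤ min (p+1) q + min p q := by omega
      omega
    · -- odd, odd
      subst hp; subst hq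
      have h1 := ih (p+1) q (by omega)
      have h2 := ih p (q+1) (by omega)
      rw [Lrec_odd, Lrec_odd]
      have e3 : 2*p+1 + (2*q+1) = 2*(p+q+1) := by omega
      rw [e3, Lrec_even]
      have e4 : p+1+q = p+q+1 := by omega
      have e5 : p+(q+1) = p+q+1 := by omega
      rw [e4] at h1; rw [e5] at h2
      have : min (2*p+1) (2*q+1) ≤ min (p+1) q + min p (q+1) + 1 := by omega
      omega

lemma claimB' (m n : ℕ) : Lrec m + Lrec n + min m n ≤ Lrec (m+n) :=
  claimB (m+n) m n le_rfl

lemma Lrec_succ_ge (a : ℕ) : Lrec a + 1 ≤ Lrec (a+1) := by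
  rcases Nat.eq_zero_or_pos a with h | h
  · subst h; simp [Lrec]
  · have := claimB' a 1
    simp [Lrec] at this
    omega

lemma Lrec_ge (a : ℕ) : a ≤ Lrec a := by
  induction a with
  | zero => simp [Lrec]
  | succ n ih => have := Lrec_succ_ge n; omega

lemma Lrec_add_le (a c : ℕ) : Lrec a + c ≤ Lrec (a + c) := by
  induction c with
  | zero => simp
  | succ n ih =>
    have h := Lrec_succ_ge (a + n)
    have e : a + (n+1) = a + n + 1 := rfl
    rw [e]
    omega

/-- The bounding function for the upper bound induction. -/
def Mb (a h : ℕ) : ℕ := (Lrec a - a) + min a h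

lemma Mb_mono {a a' h h' : ℕ} (ha : a ≤ a') (hh : h ≤ h') : Mb a h ≤ Mb a' h' := by
  unfold Mb
  have h1 := Lrec_add_le a (a' - a)
  have h2 : a + (a' - a) = a' := by omega
  rw [h2] at h1
  have := Lrec_ge a
  omega

lemma Mb_le_Lrec (a h : ℕ) : Mb a h ≤ Lrec a := by
  unfold Mb; have := Lrec_ge a; omega

lemma Mb_self (a : ℕ) : Mb a a = Lrec a := by
  unfold Mb; have := Lrec_ge a; omega

lemma Mb_step {a h : ℕ} (h1 : 1 ≤ h) (h2 : h ≤ a) : Mb a (h-1) + 1 ≤ Mb a h := by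
  unfold Mb; omega

lemma claimA {a1 a2 : ℕ} (h1 : 1 ≤ a1) (h2 : 1 ≤ a2) (h : ℕ) :
    Mb a1 h + Mb a2 h ≤ Mb (a1+a2) h := by
  unfold Mb
  have hB := claimB' a1 a2
  have g1 := Lrec_ge a1
  have g2 := Lrec_ge a2
  omega


lemma Lrec_one : Lrec 1 = 1 := by simp [Lrec]

open Finset

section UB
variable {α : Type*} [Fintype α] [PartialOrder α]

/-- relative ao -/
noncomputable def aoF (S : Finset α) : ℕ :=
  sSup {m | ∃ U ⊆ S, IsChainUnion U ∧ U.card = m}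

/-- relative height -/
noncomputable def htF (S : Finset α) : ℕ :=
  sSup {m | ∃ C ⊆ S, IsChain (· ≤ ·) (↑C : Set α) ∧ C.card = m}

lemma aoF_set_nonempty (S : Finset α) :
    {m | ∃ U ⊆ S, IsChainUnion U ∧ U.card = m}.Nonempty :=
  ⟨0, ∅, empty_subset S, fun x hx => absurd hx (notMem_empty x), card_empty⟩

lemma aoF_set_bdd (S : Finset α) :
    BddAbove {m | ∃ U ⊆ S, IsChainUnion U ∧ U.card = m} := by
  refine ⟨S.card, fun m hm => ?_⟩
  obtain ⟨U, hU, _, hcard⟩ := hm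
  exact hcard ▸ card_le_card hU

lemma htF_set_nonempty (S : Finset α) :
    {m | ∃ C ⊆ S, IsChain (· ≤ ·) (↑C : Set α) ∧ C.card = m}.Nonempty :=
  ⟨0, ∅, empty_subset S, by simp [IsChain, Set.Pairwise], card_empty⟩

lemma htF_set_bdd (S : Finset α) :
    BddAbove {m | ∃ C ⊆ S, IsChain (· ≤ ·) (↑C : Set α) ∧ C.card = m} := by
  refine ⟨S.card, fun m hm => ?_⟩
  obtain ⟨C, hC, _, hcard⟩ := hm
  exact hcard ▸ card_le_card hC

lemma aoF_exists (S : Finset α) : ∃ U ⊆ S, IsChainUnion U ∧ U.card = aoF S :=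
  Nat.sSup_mem (aoF_set_nonempty S) (aoF_set_bdd S)

lemma le_aoF {S U : Finset α} (hU : U ⊆ S) (hCU : IsChainUnion U) : U.card ≤ aoF S :=
  le_csSup (aoF_set_bdd S) ⟨U, hU, hCU, rfl⟩

lemma htF_exists (S : Finset α) : ∃ C ⊆ S, IsChain (· ≤ ·) (↑C : Set α) ∧ C.card = htF S :=
  Nat.sSup_mem (htF_set_nonempty S) (htF_set_bdd S)

lemma le_htF {S C : Finset α} (hC : C ⊆ S) (hch : IsChain (· ≤ ·) (↑C : Set α)) :
    C.card ≤ htF S :=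
  le_csSup (htF_set_bdd S) ⟨C, hC, hch, rfl⟩

lemma aoF_mono {S T : Finset α} (h : S ⊆ T) : aoF S ≤ aoF T := by
  obtain ⟨U, hU, hCU, hcard⟩ := aoF_exists S
  exact hcard ▸ le_aoF (hU.trans h) hCU

lemma htF_mono {S T : Finset α} (h : S ⊆ T) : htF S ≤ htF T := by
  obtain ⟨C, hC, hch, hcard⟩ := htF_exists S
  exact hcard ▸ le_htF (hC.trans h) hch

lemma chain_isChainUnion {C : Finset α} (hch : IsChain (· ≤ ·) (↑C : Set α)) :
    IsChainUnion C := by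
  intro x hx y hy z hz _ _
  rcases eq_or_ne x z with rfl | hne
  · exact Or.inl le_rfl
  · exact hch (by exact_mod_cast hx) (by exact_mod_cast hz) hne

lemma htF_le_aoF (S : Finset α) : htF S ≤ aoF S := by
  obtain ⟨C, hC, hch, hcard⟩ := htF_exists S
  exact hcard ▸ le_aoF hC (chain_isChainUnion hch)

lemma one_le_aoF {S : Finset α} {x : α} (hx : x ∈ S) : 1 ≤ aoF S := by
  have h : ({x} : Finset α).card ≤ aoF S := by
    apply le_aoF (by simpa using hx)
    intro a ha b hb c hc _ _
    simp only [mem_singleton] at ha hc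
    subst ha; subst hc; exact Or.inl le_rfl
  simpa using h

lemma one_le_htF {S : Finset α} {x : α} (hx : x ∈ S) : 1 ≤ htF S := by
  have h : ({x} : Finset α).card ≤ htF S := by
    apply le_htF (by simpa using hx)
    simp [IsChain, Set.Pairwise]
  simpa using h

open Classical in
theorem UB_main (hV : VFree α) (S : Finset α) : S.card ≤ Mb (aoF S) (htF S) := by
  induction S using Finset.strongInduction with
  | _ S ih =>
  rcases S.eq_empty_or_nonempty with rfl | hS
  · simp
  -- maximal element r
  obtain ⟨x, hxS⟩ := hS
  obtain ⟨r, _, hrmax⟩ := Finset.exists_le_maximal S hxS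
  have hrS : r ∈ S := hrmax.1
  have hrm : ∀ y ∈ S, ¬ r < y := fun y hy hlt =>
    absurd (hrmax.2 hy hlt.le) (not_le_of_gt hlt)
  set A : Finset α := S.filter (fun x => x ≤ r) with hA
  set B : Finset α := S.filter (fun x => ¬ x ≤ r) with hB
  have hAS : A ⊆ S := filter_subset _ _
  have hBS : B ⊆ S := filter_subset _ _
  have hrA : r ∈ A := mem_filter.2 ⟨hrS, le_rfl⟩
  have hcards : A.card + B.card = S.card := card_filter_add_card_filter_not _
  -- cross incomparability
  have hcross : ∀ x ∈ A, ∀ y ∈ B, ¬(x ≤ y ∨ y ≤ x) := by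
    intro x hx y hy
    obtain ⟨hxS', hxr⟩ := mem_filter.1 hx
    obtain ⟨hyS', hyr⟩ := mem_filter.1 hy
    rintro (hxy | hyx)
    · rcases eq_or_ne x y with rfl | hne
      · exact hyr hxr
      rcases eq_or_ne x r with rfl | hner
      · rcases lt_or_eq_of_le hxy with hlt | rfl
        · exact hrm y hyS' hlt
        · exact hyr le_rfl
      have h1 : x < y := lt_of_le_of_ne hxy hne
      have h2 : x < r := lt_of_le_of_ne hxr hner
      have := hV
      unfold VFree at this
      push_neg at this
      rcases this x y r h1 h2 with hyr' | hry
      · exact hyr hyr'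
      · rcases lt_or_eq_of_le hry with hlt | rfl
        · exact hrm y hyS' hlt
        · exact hyr le_rfl
    · exact hyr (hyx.trans hxr)
  -- ao splits
  have haoSplit : aoF A + aoF B ≤ aoF S := by
    obtain ⟨U, hUA, hUcu, hUcard⟩ := aoF_exists A
    obtain ⟨V, hVB, hVcu, hVcard⟩ := aoF_exists B
    have hdisj : Disjoint U V := by
      refine disjoint_left.2 fun a haU haV => ?_
      exact hcross a (hUA haU) a (hVB haV) (Or.inl le_rfl)
    have hsub : U ∪ V ⊆ S := union_subset (hUA.trans hAS) (hVB.trans hBS)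
    have hcu : IsChainUnion (U ∪ V) := by
      have same : ∀ x ∈ U ∪ V, ∀ y ∈ U ∪ V, (x ≤ y ∨ y ≤ x) →
          (x ∈ U ∧ y ∈ U) ∨ (x ∈ V ∧ y ∈ V) := by
        intro x hx y hy hcomp
        rcases mem_union.1 hx with hxU | hxV <;> rcases mem_union.1 hy with hyU | hyV
        · exact Or.inl ⟨hxU, hyU⟩
        · exact absurd hcomp (hcross x (hUA hxU) y (hVB hyV))
        · exact absurd (hcomp.symm.imp id id |>.symm) (by
            have := hcross y (hUA hyU) x (hVB hxV)
            tauto)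
        · exact Or.inr ⟨hxV, hyV⟩
      intro x hx y hy z hz hxy hyz
      rcases same x hx y hy hxy with ⟨hxU, hyU⟩ | ⟨hxV, hyV⟩
      · rcases same y (mem_union_left _ hyU) z hz hyz with ⟨_, hzU⟩ | ⟨hyV, _⟩
        · exact hUcu x hxU y hyU z hzU hxy hyz
        · exact absurd (hcross y (hUA hyU) y (hVB hyV)) (by simp)
      · rcases same y (mem_union_right _ hyV) z hz hyz with ⟨hyU, _⟩ | ⟨_, hzV⟩
        · exact absurd (hcross y (hUA hyU) y (hVB hyV)) (by simp)
        · exact hVcu x hxV y hyV z hzV hxy hyz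
    have := le_aoF hsub hcu
    rwa [card_union_of_disjoint hdisj, hUcard, hVcard] at this
  -- the tree part A
  set F : Finset α := A.erase r with hF
  have hFA : F ⊆ A := erase_subset _ _
  have hFS : F ⊂ S := by
    refine Finset.ssubset_iff_of_subset (hFA.trans hAS) |>.2 ⟨r, hrS, notMem_erase _ _⟩
  have hBssub : B ⊂ S := by
    refine Finset.ssubset_iff_of_subset hBS |>.2 ⟨r, hrS, fun hrB => ?_⟩
    exact (mem_filter.1 hrB).2 le_rfl
  have hcardA : F.card + 1 = A.card := card_erase_add_one hrA
  -- height recursion for A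
  have hhtFA : htF F + 1 ≤ htF A := by
    obtain ⟨C, hCF, hch, hCcard⟩ := htF_exists F
    have hrC : r ∉ C := fun h => notMem_erase r A (hCF h)
    have hsub : insert r C ⊆ A := insert_subset hrA (hCF.trans hFA)
    have hch' : IsChain (· ≤ ·) (↑(insert r C) : Set α) := by
      rw [coe_insert]
      refine hch.insert fun b hb _ => ?_
      have hbA : b ∈ A := hFA (hCF (by exact_mod_cast hb))
      exact Or.inr (mem_filter.1 hbA).2
    have := le_htF hsub hch'
    rwa [card_insert_of_notMem hrC, hCcard] at this
  have h1A : 1 ≤ htF A := one_le_htF hrA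
  have hAcard_le : A.card ≤ Mb (aoF A) (htF A) := by
    have hIH := ih F hFS
    have step1 : Mb (aoF F) (htF F) ≤ Mb (aoF A) (htF A - 1) :=
      Mb_mono (aoF_mono hFA) (by omega)
    have step2 := Mb_step h1A (htF_le_aoF A)
    omega
  -- combine
  rcases B.eq_empty_or_nonempty with hBemp | hBne
  · have : A.card = S.card := by rw [hBemp] at hcards; simpa using hcards
    rw [← this]
    exact hAcard_le.trans (Mb_mono (aoF_mono hAS) (htF_mono hAS))
  · obtain ⟨b, hbB⟩ := hBne
    have hIHB := ih B hBssub
    have h1 : A.card + B.card ≤ Mb (aoF A) (htF S) + Mb (aoF B) (htF S) := by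
      have e1 := hAcard_le.trans (Mb_mono le_rfl (htF_mono hAS))
      have e2 := hIHB.trans (Mb_mono le_rfl (htF_mono hBS))
      omega
    have h2 := claimA (one_le_aoF hrA) (one_le_aoF hbB) (htF S)
    have h3 : Mb (aoF A + aoF B) (htF S) ≤ Mb (aoF S) (htF S) :=
      Mb_mono haoSplit le_rfl
    omega

theorem UB_global (hV : VFree α) : Fintype.card α ≤ Lrec (ao α) := by
  have h1 : ao α = aoF (univ : Finset α) := by
    unfold ao aoF
    congr 1
    ext m
    constructor
    · rintro ⟨U, hcu, hcard⟩; exact ⟨U, subset_univ U, hcu, hcard⟩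
    · rintro ⟨U, _, hcu, hcard⟩; exact ⟨U, hcu, hcard⟩
  have h2 := UB_main hV (univ : Finset α)
  rw [card_univ] at h2
  calc Fintype.card α ≤ Mb (aoF univ) (htF univ) := h2
    _ ≤ Lrec (aoF univ) := Mb_le_Lrec _ _
    _ = Lrec (ao α) := by rw [h1]

end UB

section GlobalHelpers
variable (α : Type*) [Fintype α] [PartialOrder α]

lemma ao_set_nonempty : {m | ∃ U : Finset α, IsChainUnion U ∧ U.card = m}.Nonempty :=
  ⟨0, ∅, fun x hx => absurd hx (notMem_empty x), card_empty⟩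

lemma ao_set_bdd : BddAbove {m | ∃ U : Finset α, IsChainUnion U ∧ U.card = m} := by
  refine ⟨Fintype.card α, fun m hm => ?_⟩
  obtain ⟨U, _, hcard⟩ := hm
  exact hcard ▸ (card_le_card (subset_univ U)).trans (by simp)

lemma ht_set_nonempty : {m | ∃ C : Finset α, IsChain (· ≤ ·) (↑C : Set α) ∧ C.card = m}.Nonempty :=
  ⟨0, ∅, by simp [IsChain, Set.Pairwise], card_empty⟩

lemma ht_set_bdd : BddAbove {m | ∃ C : Finset α, IsChain (· ≤ ·) (↑C : Set α) ∧ C.card = m} := by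
  refine ⟨Fintype.card α, fun m hm => ?_⟩
  obtain ⟨C, _, hcard⟩ := hm
  exact hcard ▸ (card_le_card (subset_univ C)).trans (by simp)

variable {α}

lemma ao_exists : ∃ U : Finset α, IsChainUnion U ∧ U.card = ao α :=
  Nat.sSup_mem (ao_set_nonempty α) (ao_set_bdd α)

lemma le_ao {U : Finset α} (hU : IsChainUnion U) : U.card ≤ ao α :=
  le_csSup (ao_set_bdd α) ⟨U, hU, rfl⟩

lemma ht_exists : ∃ C : Finset α, IsChain (· ≤ ·) (↑C : Set α) ∧ C.card = heightP α :=
  Nat.sSup_mem (ht_set_nonempty α) (ht_set_bdd α)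

lemma le_ht {C : Finset α} (hC : IsChain (· ≤ ·) (↑C : Set α)) : C.card ≤ heightP α :=
  le_csSup (ht_set_bdd α) ⟨C, hC, rfl⟩

lemma ao_le_card : ao α ≤ Fintype.card α := by
  obtain ⟨U, _, hcard⟩ := ao_exists (α := α)
  rw [← hcard]
  exact (card_le_card (subset_univ U)).trans (by simp)

lemma ht_le_card : heightP α ≤ Fintype.card α := by
  obtain ⟨C, _, hcard⟩ := ht_exists (α := α)
  rw [← hcard]
  exact (card_le_card (subset_univ C)).trans (by simp)

lemma one_le_ao [Nonempty α] : 1 ≤ ao α := by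
  obtain ⟨x⟩ := ‹Nonempty α›
  have h : ({x} : Finset α).card ≤ ao α := by
    apply le_ao
    intro a ha b hb c hc _ _
    simp only [mem_singleton] at ha hc
    subst ha; subst hc; exact Or.inl le_rfl
  simpa using h

end GlobalHelpers

section Transfer
variable {β γ : Type*} [Fintype β] [PartialOrder β] [Fintype γ] [PartialOrder γ]

lemma isChainUnion_map (f : β ↪ γ) (hf : ∀ a b : β, f a ≤ f b ↔ a ≤ b)
    {U : Finset β} (hU : IsChainUnion U) : IsChainUnion (U.map f) := by
  intro x hx y hy z hz hxy hyz
  obtain ⟨u, hu, rfl⟩ := Finset.mem_map.1 hx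
  obtain ⟨v, hv, rfl⟩ := Finset.mem_map.1 hy
  obtain ⟨w, hw, rfl⟩ := Finset.mem_map.1 hz
  rw [hf, hf] at hxy hyz
  rcases hU u hu v hv w hw hxy hyz with h | h
  · exact Or.inl ((hf u w).2 h)
  · exact Or.inr ((hf w u).2 h)

lemma isChain_map (f : β ↪ γ) (hf : ∀ a b : β, f a ≤ f b ↔ a ≤ b)
    {C : Finset β} (hC : IsChain (· ≤ ·) (↑C : Set β)) :
    IsChain (· ≤ ·) (↑(C.map f) : Set γ) := by
  intro x hx y hy hne
  rw [coe_map] at hx hy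
  obtain ⟨u, hu, rfl⟩ := hx
  obtain ⟨v, hv, rfl⟩ := hy
  have hne' : u ≠ v := by rintro rfl; exact hne rfl
  rcases hC hu hv hne' with h | h
  · exact Or.inl ((hf u v).2 h)
  · exact Or.inr ((hf v u).2 h)

lemma ao_le_of_emb (f : β ↪ γ) (hf : ∀ a b : β, f a ≤ f b ↔ a ≤ b) : ao β ≤ ao γ := by
  obtain ⟨U, hU, hcard⟩ := ao_exists (α := β)
  rw [← hcard, ← card_map f]
  exact le_ao (isChainUnion_map f hf hU)

lemma ht_le_of_emb (f : β ↪ γ) (hf : ∀ a b : β, f a ≤ f b ↔ a ≤ b) :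
    heightP β ≤ heightP γ := by
  obtain ⟨C, hC, hcard⟩ := ht_exists (α := β)
  rw [← hcard, ← card_map f]
  exact le_ht (isChain_map f hf hC)

lemma vfree_of_emb (f : β ↪ γ) (hf : ∀ a b : β, f a ≤ f b ↔ a ≤ b)
    (hV : VFree γ) : VFree β := by
  rintro ⟨p1, p2, p3, h12, h13, hic⟩
  apply hV
  refine ⟨f p1, f p2, f p3, ?_, ?_, ?_⟩
  · exact lt_of_le_of_ne ((hf _ _).2 h12.le) (fun h => h12.ne (f.injective h))
  · exact lt_of_le_of_ne ((hf _ _).2 h13.le) (fun h => h13.ne (f.injective h))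
  · rw [hf, hf]; exact hic

end Transfer

section SumLemmas
variable {β γ : Type*} [Fintype β] [PartialOrder β] [Fintype γ] [PartialOrder γ]

open Sum

lemma sum_le_cases {x y : β ⊕ γ} (h : x ≤ y) :
    (∃ a b, x = inl a ∧ y = inl b ∧ a ≤ b) ∨ (∃ a b, x = inr a ∧ y = inr b ∧ a ≤ b) := by
  cases x with
  | inl a => cases y with
    | inl b => exact Or.inl ⟨a, b, rfl, rfl, Sum.inl_le_inl_iff.1 h⟩
    | inr b => exact absurd h Sum.not_inl_le_inr
  | inr a => cases y with
    | inl b => exact absurd h Sum.not_inr_le_inl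
    | inr b => exact Or.inr ⟨a, b, rfl, rfl, Sum.inr_le_inr_iff.1 h⟩

lemma sum_comp_cases {x y : β ⊕ γ} (h : x ≤ y ∨ y ≤ x) :
    (∃ a b, x = inl a ∧ y = inl b ∧ (a ≤ b ∨ b ≤ a)) ∨
    (∃ a b, x = inr a ∧ y = inr b ∧ (a ≤ b ∨ b ≤ a)) := by
  rcases h with h | h
  · rcases sum_le_cases h with ⟨a, b, rfl, rfl, hab⟩ | ⟨a, b, rfl, rfl, hab⟩
    · exact Or.inl ⟨a, b, rfl, rfl, Or.inl hab⟩
    · exact Or.inr ⟨a, b, rfl, rfl, Or.inl hab⟩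
  · rcases sum_le_cases h with ⟨a, b, rfl, rfl, hab⟩ | ⟨a, b, rfl, rfl, hab⟩
    · exact Or.inl ⟨b, a, rfl, rfl, Or.inr hab⟩
    · exact Or.inr ⟨b, a, rfl, rfl, Or.inr hab⟩

lemma vfree_sum (hβ : VFree β) (hγ : VFree γ) : VFree (β ⊕ γ) := by
  rintro ⟨p1, p2, p3, h12, h13, hic⟩
  rcases sum_le_cases h12.le with ⟨a, b, rfl, rfl, hab⟩ | ⟨a, b, rfl, rfl, hab⟩
  · rcases sum_le_cases h13.le with ⟨a', c, ha', rfl, hac⟩ | ⟨a', c, ha', rfl, hac⟩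
    · obtain rfl : a = a' := by injection ha'
      apply hβ
      refine ⟨a, b, c, ?_, ?_, ?_⟩
      · exact lt_of_le_of_ne hab (fun h => h12.ne (by rw [h]))
      · exact lt_of_le_of_ne hac (fun h => h13.ne (by rw [h]))
      · intro hc
        apply hic
        rcases hc with h | h
        · exact Or.inl (Sum.inl_le_inl_iff.2 h)
        · exact Or.inr (Sum.inl_le_inl_iff.2 h)
    · simp at ha'
  · rcases sum_le_cases h13.le with ⟨a', c, ha', rfl, hac⟩ | ⟨a', c, ha', rfl, hac⟩
    · simp at ha'
    · obtain rfl : a = a' := by injection ha'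
      apply hγ
      refine ⟨a, b, c, ?_, ?_, ?_⟩
      · exact lt_of_le_of_ne hab (fun h => h12.ne (by rw [h]))
      · exact lt_of_le_of_ne hac (fun h => h13.ne (by rw [h]))
      · intro hc
        apply hic
        rcases hc with h | h
        · exact Or.inl (Sum.inr_le_inr_iff.2 h)
        · exact Or.inr (Sum.inr_le_inr_iff.2 h)

lemma ao_sum : ao (β ⊕ γ) = ao β + ao γ := by
  apply le_antisymm
  · obtain ⟨W, hW, hcard⟩ := ao_exists (α := β ⊕ γ)
    have hL : IsChainUnion W.toLeft := by
      intro x hx y hy z hz hxy hyz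
      have hx' := mem_toLeft.1 hx
      have hy' := mem_toLeft.1 hy
      have hz' := mem_toLeft.1 hz
      have h1 : (inl x : β ⊕ γ) ≤ inl y ∨ (inl y : β ⊕ γ) ≤ inl x := by
        rcases hxy with h | h
        · exact Or.inl (Sum.inl_le_inl_iff.2 h)
        · exact Or.inr (Sum.inl_le_inl_iff.2 h)
      have h2 : (inl y : β ⊕ γ) ≤ inl z ∨ (inl z : β ⊕ γ) ≤ inl y := by
        rcases hyz with h | h
        · exact Or.inl (Sum.inl_le_inl_iff.2 h)
        · exact Or.inr (Sum.inl_le_inl_iff.2 h)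
      rcases hW _ hx' _ hy' _ hz' h1 h2 with h | h
      · exact Or.inl (Sum.inl_le_inl_iff.1 h)
      · exact Or.inr (Sum.inl_le_inl_iff.1 h)
    have hR : IsChainUnion W.toRight := by
      intro x hx y hy z hz hxy hyz
      have hx' := mem_toRight.1 hx
      have hy' := mem_toRight.1 hy
      have hz' := mem_toRight.1 hz
      have h1 : (inr x : β ⊕ γ) ≤ inr y ∨ (inr y : β ⊕ γ) ≤ inr x := by
        rcases hxy with h | h
        · exact Or.inl (Sum.inr_le_inr_iff.2 h)
        · exact Or.inr (Sum.inr_le_inr_iff.2 h)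
      have h2 : (inr y : β ⊕ γ) ≤ inr z ∨ (inr z : β ⊕ γ) ≤ inr y := by
        rcases hyz with h | h
        · exact Or.inl (Sum.inr_le_inr_iff.2 h)
        · exact Or.inr (Sum.inr_le_inr_iff.2 h)
      rcases hW _ hx' _ hy' _ hz' h1 h2 with h | h
      · exact Or.inl (Sum.inr_le_inr_iff.1 h)
      · exact Or.inr (Sum.inr_le_inr_iff.1 h)
    calc ao (β ⊕ γ) = W.card := hcard.symm
      _ = W.toLeft.card + W.toRight.card := (card_toLeft_add_card_toRight).symm
      _ ≤ ao β + ao γ := Nat.add_le_add (le_ao hL) (le_ao hR)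
  · obtain ⟨U, hU, hUcard⟩ := ao_exists (α := β)
    obtain ⟨V, hV, hVcard⟩ := ao_exists (α := γ)
    have hCU : IsChainUnion (U.disjSum V) := by
      intro x hx y hy z hz hxy hyz
      rcases sum_comp_cases hxy with ⟨a, b, rfl, rfl, hab⟩ | ⟨a, b, rfl, rfl, hab⟩
      · rcases sum_comp_cases hyz with ⟨b', c, hb', rfl, hbc⟩ | ⟨b', c, hb', rfl, hbc⟩
        · obtain rfl : b = b' := by injection hb'
          have := hU a (inl_mem_disjSum.1 hx) b (inl_mem_disjSum.1 hy) c (inl_mem_disjSum.1 hz) hab hbc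
          rcases this with h | h
          · exact Or.inl (Sum.inl_le_inl_iff.2 h)
          · exact Or.inr (Sum.inl_le_inl_iff.2 h)
        · simp at hb'
      · rcases sum_comp_cases hyz with ⟨b', c, hb', rfl, hbc⟩ | ⟨b', c, hb', rfl, hbc⟩
        · simp at hb'
        · obtain rfl : b = b' := by injection hb'
          have := hV a (inr_mem_disjSum.1 hx) b (inr_mem_disjSum.1 hy) c (inr_mem_disjSum.1 hz) hab hbc
          rcases this with h | h
          · exact Or.inl (Sum.inr_le_inr_iff.2 h)
          · exact Or.inr (Sum.inr_le_inr_iff.2 h)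
    have := le_ao hCU
    rwa [card_disjSum, hUcard, hVcard] at this

lemma ht_sum_le : heightP (β ⊕ γ) ≤ max (heightP β) (heightP γ) := by
  obtain ⟨C, hC, hcard⟩ := ht_exists (α := β ⊕ γ)
  rw [← hcard]
  have hsplit := card_toLeft_add_card_toRight (u := C)
  rcases C.toLeft.eq_empty_or_nonempty with hL | ⟨a, ha⟩
  · -- all in right
    have hchain : IsChain (· ≤ ·) (↑C.toRight : Set γ) := by
      intro x hx y hy hne
      have hx' := mem_toRight.1 (by exact_mod_cast hx)
      have hy' := mem_toRight.1 (by exact_mod_cast hy)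
      have := hC (x := inr x) (by exact_mod_cast hx') (y := inr y) (by exact_mod_cast hy')
        (by simpa using hne)
      rcases this with h | h
      · exact Or.inl (Sum.inr_le_inr_iff.1 h)
      · exact Or.inr (Sum.inr_le_inr_iff.1 h)
    have : C.card = C.toRight.card := by rw [← hsplit, hL]; simp
    rw [this]
    exact le_max_of_le_right (le_ht hchain)
  · rcases C.toRight.eq_empty_or_nonempty with hR | ⟨b, hb⟩
    · have hchain : IsChain (· ≤ ·) (↑C.toLeft : Set β) := by
        intro x hx y hy hne
        have hx' := mem_toLeft.1 (by exact_mod_cast hx)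
        have hy' := mem_toLeft.1 (by exact_mod_cast hy)
        have := hC (x := inl x) (by exact_mod_cast hx') (y := inl y) (by exact_mod_cast hy')
          (by simpa using hne)
        rcases this with h | h
        · exact Or.inl (Sum.inl_le_inl_iff.1 h)
        · exact Or.inr (Sum.inl_le_inl_iff.1 h)
      have : C.card = C.toLeft.card := by rw [← hsplit, hR]; simp
      rw [this]
      exact le_max_of_le_left (le_ht hchain)
    · -- both nonempty: contradiction
      exfalso
      have haC : (inl a : β ⊕ γ) ∈ C := mem_toLeft.1 ha
      have hbC : (inr b : β ⊕ γ) ∈ C := mem_toRight.1 hb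
      have hne : (inl a : β ⊕ γ) ≠ inr b := by simp
      rcases hC (by exact_mod_cast haC) (by exact_mod_cast hbC) hne with h | h
      · exact Sum.not_inl_le_inr h
      · exact Sum.not_inr_le_inl h

end SumLemmas

section TopLemmas
variable {β : Type*} [Fintype β] [PartialOrder β]

noncomputable instance : Fintype (WithTop β) := inferInstanceAs (Fintype (Option β))

lemma card_withTop : Fintype.card (WithTop β) = Fintype.card β + 1 := by
  exact Fintype.card_option

lemma coe_emb_le (a b : β) :
    ((⟨WithTop.some, WithTop.coe_injective⟩ : β ↪ WithTop β) a) ≤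
    ((⟨WithTop.some, WithTop.coe_injective⟩ : β ↪ WithTop β) b) ↔ a ≤ b := WithTop.coe_le_coe

lemma vfree_withTop (hβ : VFree β) : VFree (WithTop β) := by
  rintro ⟨p1, p2, p3, h12, h13, hic⟩
  have h2 : p2 ≠ ⊤ := by rintro rfl; exact hic (Or.inr le_top)
  have h3 : p3 ≠ ⊤ := by rintro rfl; exact hic (Or.inl le_top)
  obtain ⟨b2, rfl⟩ := Option.ne_none_iff_exists'.1 h2
  obtain ⟨b3, rfl⟩ := Option.ne_none_iff_exists'.1 h3
  have h1 : p1 ≠ ⊤ := by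
    rintro rfl
    exact not_top_lt h12
  obtain ⟨b1, rfl⟩ := Option.ne_none_iff_exists'.1 h1
  apply hβ
  refine ⟨b1, b2, b3, ?_, ?_, ?_⟩
  · exact WithTop.coe_lt_coe.1 h12
  · exact WithTop.coe_lt_coe.1 h13
  · intro h
    apply hic
    rcases h with h | h
    · exact Or.inl (WithTop.coe_le_coe.2 h)
    · exact Or.inr (WithTop.coe_le_coe.2 h)

lemma ao_le_withTop : ao β ≤ ao (WithTop β) :=
  ao_le_of_emb _ coe_emb_le

lemma ht_le_withTop : heightP β ≤ heightP (WithTop β) :=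
  ht_le_of_emb _ coe_emb_le

lemma no_top_pullback {W : Finset (WithTop β)} (hW : (⊤ : WithTop β) ∉ W) :
    ∃ U : Finset β, U.map ⟨WithTop.some, WithTop.coe_injective⟩ = W := by
  classical
  refine ⟨Finset.eraseNone W, ?_⟩
  have h1 : (Finset.eraseNone W).map Function.Embedding.some = W.erase none :=
    Finset.map_some_eraseNone W
  have h2 : W.erase none = W := erase_eq_of_notMem hW
  exact h1.trans h2

lemma ht_withTop_le : heightP (WithTop β) ≤ heightP β + 1 := by
  classical
  obtain ⟨C, hC, hcard⟩ := ht_exists (α := WithTop β)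
  rw [← hcard]
  have hnot : (⊤ : WithTop β) ∉ C.erase ⊤ := notMem_erase _ _
  obtain ⟨U, hU⟩ := no_top_pullback hnot
  have hchain : IsChain (· ≤ ·) (↑U : Set β) := by
    intro x hx y hy hne
    have hxC : (x : WithTop β) ∈ C.erase ⊤ := by
      rw [← hU]; exact mem_map_of_mem _ (by exact_mod_cast hx)
    have hyC : (y : WithTop β) ∈ C.erase ⊤ := by
      rw [← hU]; exact mem_map_of_mem _ (by exact_mod_cast hy)
    have := hC (mem_coe.2 (mem_of_mem_erase hxC)) (mem_coe.2 (mem_of_mem_erase hyC))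
      (by simpa using hne)
    rcases this with h | h
    · exact Or.inl (WithTop.coe_le_coe.1 h)
    · exact Or.inr (WithTop.coe_le_coe.1 h)
  have hcard2 : U.card = (C.erase ⊤).card := by rw [← hU, card_map]
  have := le_ht hchain
  have herase : C.card ≤ (C.erase ⊤).card + 1 := by
    by_cases h : (⊤ : WithTop β) ∈ C
    · rw [card_erase_of_mem h]; omega
    · rw [erase_eq_of_notMem h]; omega
  omega

lemma ao_withTop_le : ao (WithTop β) ≤ max (ao β) (heightP (WithTop β)) := by
  obtain ⟨W, hW, hcard⟩ := ao_exists (α := WithTop β)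
  rw [← hcard]
  by_cases htop : (⊤ : WithTop β) ∈ W
  · -- W is a chain
    have hchain : IsChain (· ≤ ·) (↑W : Set (WithTop β)) := by
      intro x hx y hy hne
      exact hW x (mem_coe.1 hx) ⊤ htop y (mem_coe.1 hy) (Or.inl le_top) (Or.inr le_top)
    exact le_max_of_le_right (le_ht hchain)
  · obtain ⟨U, hU⟩ := no_top_pullback htop
    have hCU : IsChainUnion U := by
      intro x hx y hy z hz hxy hyz
      have hxW : (x : WithTop β) ∈ W := by rw [← hU]; exact mem_map_of_mem _ hx
      have hyW : (y : WithTop β) ∈ W := by rw [← hU]; exact mem_map_of_mem _ hy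
      have hzW : (z : WithTop β) ∈ W := by rw [← hU]; exact mem_map_of_mem _ hz
      have h1 : (x : WithTop β) ≤ y ∨ (y : WithTop β) ≤ x := by
        rcases hxy with h | h
        · exact Or.inl (WithTop.coe_le_coe.2 h)
        · exact Or.inr (WithTop.coe_le_coe.2 h)
      have h2 : (y : WithTop β) ≤ z ∨ (z : WithTop β) ≤ y := by
        rcases hyz with h | h
        · exact Or.inl (WithTop.coe_le_coe.2 h)
        · exact Or.inr (WithTop.coe_le_coe.2 h)
      rcases hW _ hxW _ hyW _ hzW h1 h2 with h | h
      · exact Or.inl (WithTop.coe_le_coe.1 h)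
      · exact Or.inr (WithTop.coe_le_coe.1 h)
    have : W.card = U.card := by rw [← hU, card_map]
    rw [this]
    exact le_max_of_le_left (le_ao hCU)

end TopLemmas

section Bundle

structure BFP : Type 1 where
  carrier : Type
  fin : Fintype carrier
  po : PartialOrder carrier

noncomputable def BFP.card (X : BFP) : ℕ := @Fintype.card X.carrier X.fin
noncomputable def BFP.aoB (X : BFP) : ℕ := @ao X.carrier X.fin X.po
noncomputable def BFP.htB (X : BFP) : ℕ := @heightP X.carrier X.fin X.po
def BFP.vfree (X : BFP) : Prop := @VFree X.carrier X.po

def unitFP : BFP := ⟨PUnit, inferInstance, inferInstance⟩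

def sumFP (X Y : BFP) : BFP :=
  letI := X.fin; letI := X.po; letI := Y.fin; letI := Y.po
  ⟨X.carrier ⊕ Y.carrier, inferInstance, inferInstance⟩

noncomputable def addTop (X : BFP) : BFP :=
  letI := X.fin; letI := X.po
  ⟨WithTop X.carrier, inferInstanceAs (Fintype (Option X.carrier)), inferInstance⟩

noncomputable def addTops : ℕ → BFP → BFP
  | 0, X => X
  | (k+1), X => addTop (addTops k X)

lemma unitFP_card : unitFP.card = 1 := rfl

lemma unitFP_vfree : unitFP.vfree := by
  show VFree PUnit
  rintro ⟨p1, p2, p3, h12, _, hic⟩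
  exact hic (Or.inl (le_of_eq rfl))

lemma unitFP_ao : unitFP.aoB = 1 := by
  show ao PUnit = 1
  apply le_antisymm
  · exact (ao_le_card (α := PUnit)).trans (by simp)
  · exact one_le_ao

lemma unitFP_ht : unitFP.htB ≤ 1 := by
  show heightP PUnit ≤ 1
  simpa using ht_le_card (α := PUnit)

lemma sumFP_card (X Y : BFP) : (sumFP X Y).card = X.card + Y.card := by
  letI := X.fin; letI := X.po; letI := Y.fin; letI := Y.po
  exact Fintype.card_sum

lemma sumFP_vfree {X Y : BFP} (hX : X.vfree) (hY : Y.vfree) : (sumFP X Y).vfree := by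
  letI := X.fin; letI := X.po; letI := Y.fin; letI := Y.po
  exact vfree_sum hX hY

lemma sumFP_ao (X Y : BFP) : (sumFP X Y).aoB = X.aoB + Y.aoB := by
  letI := X.fin; letI := X.po; letI := Y.fin; letI := Y.po
  exact ao_sum

lemma sumFP_ht (X Y : BFP) : (sumFP X Y).htB ≤ max X.htB Y.htB := by
  letI := X.fin; letI := X.po; letI := Y.fin; letI := Y.po
  exact ht_sum_le

lemma addTop_card (X : BFP) : (addTop X).card = X.card + 1 := by
  letI := X.fin; letI := X.po
  exact card_withTop

lemma addTop_vfree {X : BFP} (hX : X.vfree) : (addTop X).vfree := by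
  letI := X.fin; letI := X.po
  exact vfree_withTop hX

lemma addTop_ao_le (X : BFP) : (addTop X).aoB ≤ max X.aoB (addTop X).htB := by
  letI := X.fin; letI := X.po
  exact ao_withTop_le

lemma addTop_ao_ge (X : BFP) : X.aoB ≤ (addTop X).aoB := by
  letI := X.fin; letI := X.po
  exact ao_le_withTop

lemma addTop_ht_le (X : BFP) : (addTop X).htB ≤ X.htB + 1 := by
  letI := X.fin; letI := X.po
  exact ht_withTop_le

lemma addTop_ht_ge (X : BFP) : X.htB ≤ (addTop X).htB := by
  letI := X.fin; letI := X.po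
  exact ht_le_withTop

lemma addTops_inv (k : ℕ) (X : BFP) (hX : X.vfree) :
    (addTops k X).card = X.card + k ∧ (addTops k X).vfree ∧
    (addTops k X).htB ≤ X.htB + k ∧
    (addTops k X).aoB ≤ max X.aoB (addTops k X).htB ∧
    X.aoB ≤ (addTops k X).aoB := by
  induction k with
  | zero =>
    refine ⟨rfl, hX, by simp [addTops], ?_, le_rfl⟩
    · simp only [addTops]
      exact le_max_left _ _
  | succ k ih =>
    obtain ⟨hc, hv, hh, hao, haoge⟩ := ih
    have h0 : addTops (k+1) X = addTop (addTops k X) := rfl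
    rw [h0]
    refine ⟨by rw [addTop_card, hc]; omega, addTop_vfree hv, ?_, ?_, ?_⟩
    · have := addTop_ht_le (addTops k X); omega
    · have h1 := addTop_ao_le (addTops k X)
      have h2 := addTop_ht_ge (addTops k X)
      omega
    · exact haoge.trans (addTop_ao_ge _)

noncomputable def CC : ℕ → BFP
  | 0 => unitFP
  | 1 => unitFP
  | (n+2) => addTops ((n+2)/2) (sumFP (CC ((n+3)/2)) (CC ((n+2)/2)))
decreasing_by all_goals omega

lemma CC_inv : ∀ a, 1 ≤ a →
    (CC a).card = Lrec a ∧ (CC a).vfree ∧ (CC a).aoB = a ∧ (CC a).htB ≤ a := by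
  intro a
  induction a using Nat.strong_induction_on with
  | _ a ih =>
  intro ha
  match a, ha with
  | 1, _ =>
    have hCC1 : CC 1 = unitFP := by rw [CC]
    rw [hCC1, Lrec_one]
    exact ⟨unitFP_card, unitFP_vfree, unitFP_ao, unitFP_ht⟩
  | (n+2), _ =>
    have h1 : 1 ≤ (n+3)/2 := by omega
    have h2 : 1 ≤ (n+2)/2 := by omega
    have l1 : (n+3)/2 < n+2 := by omega
    have l2 : (n+2)/2 < n+2 := by omega
    obtain ⟨c1, v1, a1, t1⟩ := ih ((n+3)/2) l1 h1
    obtain ⟨c2, v2, a2, t2⟩ := ih ((n+2)/2) l2 h2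
    set I := sumFP (CC ((n+3)/2)) (CC ((n+2)/2)) with hI
    have hIc : I.card = Lrec ((n+3)/2) + Lrec ((n+2)/2) := by
      rw [hI, sumFP_card, c1, c2]
    have hIv : I.vfree := sumFP_vfree v1 v2
    have hIa : I.aoB = n+2 := by
      rw [hI, sumFP_ao, a1, a2]; omega
    have hIt : I.htB ≤ (n+3)/2 := by
      have := sumFP_ht (CC ((n+3)/2)) (CC ((n+2)/2))
      rw [← hI] at this
      omega
    have hCC : CC (n+2) = addTops ((n+2)/2) I := by rw [CC]
    obtain ⟨hc, hv, hh, hao, haoge⟩ := addTops_inv ((n+2)/2) I hIv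
    rw [hCC]
    have hht : (addTops ((n+2)/2) I).htB ≤ n+2 := by omega
    refine ⟨?_, hv, ?_, hht⟩
    · rw [hc, hIc, Lrec_rec (n+2)]
    · have hle : (addTops ((n+2)/2) I).aoB ≤ n+2 := by omega
      have hge : n+2 ≤ (addTops ((n+2)/2) I).aoB := by omega
      omega

end Bundle

-- transfer to Fin
lemma exists_fin_poset (b : ℕ) (hb : 1 ≤ b) :
    ∃ P : PartialOrder (Fin (Lrec b)), @VFree (Fin (Lrec b)) P ∧
      @ao (Fin (Lrec b)) (Fin.fintype (Lrec b)) P = b ∧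
      @heightP (Fin (Lrec b)) (Fin.fintype (Lrec b)) P ≤ b := by
  obtain ⟨hcard, hv, hao, hht⟩ := CC_inv b hb
  letI instF := (CC b).fin
  letI instP := (CC b).po
  have hcard' : Fintype.card (CC b).carrier = Lrec b := hcard
  have e : (CC b).carrier ≃ Fin (Lrec b) := Fintype.equivFinOfCardEq hcard'
  letI P : PartialOrder (Fin (Lrec b)) := PartialOrder.lift e.symm e.symm.injective
  have hao' : @ao (CC b).carrier instF instP = b := hao
  have hht' : @heightP (CC b).carrier instF instP ≤ b := hht
  have hv' : @VFree (CC b).carrier instP := hv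
  have hbwd : ∀ x y : (CC b).carrier, e.symm (e x) ≤ e.symm (e y) ↔ x ≤ y := fun x y => by
    rw [e.symm_apply_apply, e.symm_apply_apply]
  refine ⟨P, ?_, ?_, ?_⟩
  · exact @vfree_of_emb (Fin (Lrec b)) ((CC b).carrier) (Fin.fintype _) P instF instP
      ⟨e.symm, e.symm.injective⟩ (fun x y => Iff.rfl) hv'
  · apply le_antisymm
    · have h1 := @ao_le_of_emb (Fin (Lrec b)) ((CC b).carrier) (Fin.fintype _) P instF instP
        ⟨e.symm, e.symm.injective⟩ (fun x y => Iff.rfl)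
      rw [hao'] at h1
      exact h1
    · have h2 := @ao_le_of_emb ((CC b).carrier) (Fin (Lrec b)) instF instP (Fin.fintype _) P
        ⟨e, e.injective⟩ hbwd
      rw [hao'] at h2
      exact h2
  · have h3 := @ht_le_of_emb (Fin (Lrec b)) ((CC b).carrier) (Fin.fintype _) P instF instP
      ⟨e.symm, e.symm.injective⟩ (fun x y => Iff.rfl)
    exact h3.trans hht'

lemma Lambda_eq (b : ℕ) (hb : 1 ≤ b) : Lambda b = Lrec b := by
  unfold Lambda Lam
  apply IsGreatest.csSup_eq
  constructor
  · exact exists_fin_poset b hb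
  · rintro n ⟨P, hv, hao, _⟩
    have h := @UB_global (Fin n) (Fin.fintype n) P hv
    rw [hao] at h
    simpa using h


end AuxProof

/-- for `a ≥ 2`, `Λ(a) = Λ(⌈a/2⌉) + Λ(⌊a/2⌋) + ⌊a/2⌋`. -/
theorem Lambda_half (a : ℕ) (ha : 2 ≤ a) :
    Lambda a = Lambda ((a + 1) / 2) + Lambda (a / 2) + a / 2 := by
  rw [Lambda_eq a (by omega), Lambda_eq ((a+1)/2) (by omega), Lambda_eq (a/2) (by omega)]
  exact Lrec_rec a
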